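/- Let G be the semi-Markovian causal graph with observed variables V = {X₁, X₂, Y₁, Y₂}, unobserved variables U = {U₁, U₂}, and directed edges X₁ → Y₁, X₂ → Y₂, U₁ → X₁, U₁ → X₂, U₂ → Y₁, U₂ → Y₂. Then there exist SEMs M₁, M₂ ∈ 𝕄(G), with all observed domains equal to {0,1}, such that P^{M₁}(v) = P^{M₂}(v) for every v ∈ dom(V), yet P^{M₁}_{(X₁,X₂)=(0,1)}(Y₁=0, Y₂=0) ≠ P^{M₂}_{(X₁,X₂)=(0,1)}(Y₁=0, Y₂=0). Consequently, if in the definition of identifiability the class 𝕄⁺(G) is replaced by 𝕄(G) (i.e., the positivity assumption is dropped), the causal effect of {X₁, X₂} on {Y₁, Y₂} is not identifiable from G. -/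

import Mathlib

open scoped Classical

/-- A semi-Markovian causal graph: a DAG over a finite vertex set partitioned into
observed (`obs`) and unobserved (`unobs`) variables, where every unobserved variable
has no parents and exactly two (distinct, observed) children. -/
structure CausalGraph (ν : Type) [Fintype ν] [DecidableEq ν] where
  obs : Finset ν
  unobs : Finset ν
  disj : Disjoint obs unobs
  E : ν → ν → Prop
  edge_mem : ∀ x y, E x y → x ∈ obs ∪ unobs ∧ y ∈ obs ∪ unobs
  acyclic : ∀ x, ¬ Relation.TransGen E x x
  unobs_no_parent : ∀ u ∈ unobs, ∀ w, ¬ E w u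
  unobs_two_children : ∀ u ∈ unobs,
    ∃ a b, a ≠ b ∧ a ∈ obs ∧ b ∈ obs ∧ (∀ w, E u w ↔ w = a ∨ w = b)

namespace CausalGraph

variable {ν : Type} [Fintype ν] [DecidableEq ν]

def verts (G : CausalGraph ν) : Finset ν := G.obs ∪ G.unobs

/-- A structural equation model over the causal graph `G`: finite nonempty domains
(encoded as finite sets of naturals), a pmf for each unobserved variable, and a
conditional pmf (given an assignment to the parents) for each observed variable. -/
structure SEM (G : CausalGraph ν) where
  dom : ν → Finset ℕ
  dom_ne : ∀ x, (dom x).Nonempty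
  pU : ν → ℕ → ℝ
  pU_nonneg : ∀ u n, 0 ≤ pU u n
  pU_sum : ∀ u ∈ G.unobs, ∑ n ∈ dom u, pU u n = 1
  pO : ν → ℕ → (ν → ℕ) → ℝ
  pO_nonneg : ∀ x n pa, 0 ≤ pO x n pa
  pO_sum : ∀ x ∈ G.obs, ∀ pa : ν → ℕ, ∑ n ∈ dom x, pO x n pa = 1
  pO_par : ∀ x n (pa pa' : ν → ℕ), (∀ p, G.E p x → pa p = pa' p) → pO x n pa = pO x n pa'

namespace SEM

variable {G : CausalGraph ν}

/-- Full assignments: all variables of `G` get values in their domains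
(non-vertices are pinned to `0`). -/
noncomputable def fullAssign (M : SEM G) : Finset (ν → ℕ) :=
  Fintype.piFinset (fun x => if x ∈ G.verts then M.dom x else {0})

/-- Observed assignments `dom(V)`: observed variables get values in their domains
(all other coordinates are pinned to `0`). -/
noncomputable def obsAssign (M : SEM G) : Finset (ν → ℕ) :=
  Fintype.piFinset (fun x => if x ∈ G.obs then M.dom x else {0})

/-- `Q^M[S](v) = Σ_u Π_{X ∈ S} P(x | pa_G(X)) Π_{U} P(u)`. -/
noncomputable def Q (M : SEM G) (S : Finset ν) (v : ν → ℕ) : ℝ :=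
  ∑ w ∈ M.fullAssign.filter (fun w => ∀ x ∈ G.obs, w x = v x),
    (∏ x ∈ S, M.pO x (w x) w) * ∏ u ∈ G.unobs, M.pU u (w u)

/-- The observational distribution `P^M(v) = Q^M[V](v)`. -/
noncomputable def P (M : SEM G) (v : ν → ℕ) : ℝ := M.Q G.obs v

/-- Post-interventional probability `P^M_x(y)`: sum of `Q^M[V∖X]` over all observed
realizations consistent with `x` on `X` and `y` on `Y`. -/
noncomputable def Px (M : SEM G) (X : Finset ν) (x : ν → ℕ) (Y : Finset ν) (y : ν → ℕ) : ℝ :=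
  ∑ v ∈ M.obsAssign.filter (fun v => (∀ i ∈ X, v i = x i) ∧ (∀ i ∈ Y, v i = y i)),
    M.Q (G.obs \ X) v

/-- `M ∈ 𝕄⁺(G)`: strictly positive observational distribution. -/
def positive (M : SEM G) : Prop := ∀ v ∈ M.obsAssign, 0 < M.P v

end SEM

/-- The causal effect of `X` on `Y` is identifiable from `G`. -/
def Identifiable (G : CausalGraph ν) (X Y : Finset ν) : Prop :=
  ∀ M₁ M₂ : SEM G, M₁.positive → M₂.positive →
    (∀ i ∈ G.obs, M₁.dom i = M₂.dom i) →
    (∀ v ∈ M₁.obsAssign, M₁.P v = M₂.P v) →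
    ∀ x y : ν → ℕ, (∀ i ∈ X, x i ∈ M₁.dom i) → (∀ i ∈ Y, y i ∈ M₁.dom i) →
      M₁.Px X x Y y = M₂.Px X x Y y

/-- `Q[S]` is identifiable from `G`. -/
def QIdentifiable (G : CausalGraph ν) (S : Finset ν) : Prop :=
  Identifiable G (G.obs \ S) S

/-- The causal effect of `X` on `Y` is g-identifiable from `(𝔸, G)`. -/
def GIdentifiable (G : CausalGraph ν) (𝔸 : Finset (Finset ν)) (X Y : Finset ν) : Prop :=
  ∀ M₁ M₂ : SEM G, M₁.positive → M₂.positive →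
    (∀ i ∈ G.obs, M₁.dom i = M₂.dom i) →
    (∀ A ∈ 𝔸, ∀ v ∈ M₁.obsAssign, M₁.Q A v = M₂.Q A v) →
    ∀ x y : ν → ℕ, (∀ i ∈ X, x i ∈ M₁.dom i) → (∀ i ∈ Y, y i ∈ M₁.dom i) →
      M₁.Px X x Y y = M₂.Px X x Y y

/-- `Q[S]` is g-identifiable from `(𝔸, G)`. -/
def QGIdentifiable (G : CausalGraph ν) (𝔸 : Finset (Finset ν)) (S : Finset ν) : Prop :=
  GIdentifiable G 𝔸 (G.obs \ S) S

/-- Bidirected edge of `G_X` between `a` and `b`: distinct members of `X` sharing an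
unobserved parent (whose two children then necessarily both lie in `X`). -/
def biEdge (G : CausalGraph ν) (X : Finset ν) (a b : ν) : Prop :=
  a ≠ b ∧ a ∈ X ∧ b ∈ X ∧ ∃ u ∈ G.unobs, G.E u a ∧ G.E u b

/-- `X` is a single c-component of `G`. -/
def SingleC (G : CausalGraph ν) (X : Finset ν) : Prop :=
  X.Nonempty ∧ ∀ a ∈ X, ∀ b ∈ X, Relation.ReflTransGen (G.biEdge X) a b

/-- The c-components of `S`: connected components of the bidirected part of `G_S`. -/
noncomputable def cComponents (G : CausalGraph ν) (S : Finset ν) : Finset (Finset ν) :=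
  S.image (fun a => S.filter (fun b => Relation.ReflTransGen (G.biEdge S) a b))

/-- Directed edge of `G_X` (both endpoints in `X`). -/
def dirEdgeIn (G : CausalGraph ν) (X : Finset ν) (a b : ν) : Prop :=
  a ∈ X ∧ b ∈ X ∧ G.E a b

/-- `Anc_Y(G_X)`: members of `X` having a directed path in `G_X` to some member of `Y`. -/
noncomputable def ancIn (G : CausalGraph ν) (X Y : Finset ν) : Finset ν :=
  X.filter (fun a => ∃ y ∈ Y, Relation.ReflTransGen (G.dirEdgeIn X) a y)

/-- Unobserved vertices of the induced subgraph `G[A]`: unobserved vertices of `G`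
both of whose children lie in `A`. -/
noncomputable def inducedUnobs (G : CausalGraph ν) (A : Finset ν) : Finset ν :=
  G.unobs.filter (fun u => ∀ w, G.E u w → w ∈ A)

/-- The induced subgraph `G[A]`. -/
noncomputable def induced (G : CausalGraph ν) (A : Finset ν) : CausalGraph ν where
  obs := A ∩ G.obs
  unobs := G.inducedUnobs A
  disj := G.disj.mono Finset.inter_subset_right (Finset.filter_subset _ _)
  E x y := G.E x y ∧ x ∈ (A ∩ G.obs) ∪ G.inducedUnobs A ∧ y ∈ (A ∩ G.obs) ∪ G.inducedUnobs A
  edge_mem := fun x y h => ⟨h.2.1, h.2.2⟩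
  acyclic := by
    intro x h
    have key : ∀ a b, Relation.TransGen
        (fun x y => G.E x y ∧ x ∈ (A ∩ G.obs) ∪ G.inducedUnobs A ∧
          y ∈ (A ∩ G.obs) ∪ G.inducedUnobs A) a b → Relation.TransGen G.E a b := by
      intro a b hab
      induction hab with
      | single hab => exact Relation.TransGen.single hab.1
      | tail _ hbc ih => exact Relation.TransGen.tail ih hbc.1
    exact G.acyclic x (key x x h)
  unobs_no_parent := fun u hu w hw =>
    G.unobs_no_parent u (Finset.mem_filter.mp hu).1 w hw.1
  unobs_two_children := by
    intro u hu
    have hu' := Finset.mem_filter.mp hu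
    obtain ⟨a, b, hab, ha, hb, hiff⟩ := G.unobs_two_children u hu'.1
    have hEa : G.E u a := (hiff a).mpr (Or.inl rfl)
    have hEb : G.E u b := (hiff b).mpr (Or.inr rfl)
    have haA : a ∈ A := hu'.2 a hEa
    have hbA : b ∈ A := hu'.2 b hEb
    refine ⟨a, b, hab, Finset.mem_inter.mpr ⟨haA, ha⟩, Finset.mem_inter.mpr ⟨hbA, hb⟩, ?_⟩
    intro w
    constructor
    · intro hw; exact (hiff w).mp hw.1
    · rintro (rfl | rfl)
      · exact ⟨hEa, Finset.mem_union.mpr (Or.inr hu),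
          Finset.mem_union.mpr (Or.inl (Finset.mem_inter.mpr ⟨haA, ha⟩))⟩
      · exact ⟨hEb, Finset.mem_union.mpr (Or.inr hu),
          Finset.mem_union.mpr (Or.inl (Finset.mem_inter.mpr ⟨hbA, hb⟩))⟩

/-- `H` is a subgraph of `G`. -/
def IsSubgraph (H G : CausalGraph ν) : Prop :=
  H.obs ⊆ G.obs ∧ H.unobs ⊆ G.unobs ∧ ∀ a b, H.E a b → G.E a b

/-- `H` is an `R`-rooted c-forest: `R` is the root set of `H`, the observed vertex set of
`H` is a single c-component, and every observed vertex has at most one child in `H`. -/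
def IsCForest (H : CausalGraph ν) (R : Finset ν) : Prop :=
  H.obs.filter (fun x => ∀ w, ¬ H.E x w) = R ∧
  H.SingleC H.obs ∧
  ∀ x ∈ H.obs, ∀ w w', H.E x w → H.E x w' → w = w'

end CausalGraph

/-- Identifiability with the positivity assumption dropped (models range over all of
`𝕄(G)` rather than `𝕄⁺(G)`). -/
def CausalGraph.IdentifiableNP {ν : Type} [Fintype ν] [DecidableEq ν]
    (G : CausalGraph ν) (X Y : Finset ν) : Prop :=
  ∀ M₁ M₂ : CausalGraph.SEM G,
    (∀ i ∈ G.obs, M₁.dom i = M₂.dom i) →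
    (∀ v ∈ M₁.obsAssign, M₁.P v = M₂.P v) →
    ∀ x y : ν → ℕ, (∀ i ∈ X, x i ∈ M₁.dom i) → (∀ i ∈ Y, y i ∈ M₁.dom i) →
      M₁.Px X x Y y = M₂.Px X x Y y


namespace Ex2Counterexample

open CausalGraph

variable (G : CausalGraph (Fin 6))

noncomputable def exSEM (G : CausalGraph (Fin 6))
    (hobs : G.obs = {0, 1, 2, 3})
    (hE : ∀ a b : Fin 6, G.E a b ↔
      ((a, b) = (0, 2) ∨ (a, b) = (1, 3) ∨ (a, b) = (4, 0) ∨
       (a, b) = (4, 1) ∨ (a, b) = (5, 2) ∨ (a, b) = (5, 3)))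
    (det : Bool) : CausalGraph.SEM G where
  dom i := if (i : ℕ) < 4 then {0, 1} else {0}
  dom_ne i := by split <;> simp
  pU _ n := if n = 0 then 1 else 0
  pU_nonneg := by intro u n; split <;> norm_num
  pU_sum := by intro u _; by_cases h : (u : ℕ) < 4 <;> simp [h]
  pO x n pa := if x = 3 ∧ det = true then (if n = min (pa 1) 1 then 1 else 0)
               else (if n = 0 then 1 else 0)
  pO_nonneg := by intro x n pa; split_ifs <;> norm_num
  pO_sum := by
    intro x hx pa
    rw [hobs] at hx
    have hx4 : (x : ℕ) < 4 := by fin_cases hx <;> decide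
    simp only [hx4, if_true]
    by_cases h : x = 3 ∧ det = true
    · simp only [if_pos h]
      have hm : min (pa 1) 1 ≤ 1 := min_le_right _ _
      rcases Nat.le_one_iff_eq_zero_or_eq_one.mp hm with h0 | h0 <;> rw [h0] <;> simp
    · simp [h]
  pO_par := by
    intro x n pa pa' h
    by_cases hx : x = 3 ∧ det = true
    · obtain ⟨rfl, hd⟩ := hx
      have h13 : pa 1 = pa' 1 := h 1 ((hE 1 3).mpr (Or.inr (Or.inl rfl)))
      simp [hd, h13]
    · simp [hx]


lemma obs_iff (hobs : G.obs = {0, 1, 2, 3}) (i : Fin 6) : i ∈ G.obs ↔ (i : ℕ) < 4 := by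
  rw [hobs]; fin_cases i <;> decide

lemma verts_univ (hobs : G.obs = {0, 1, 2, 3}) (hunobs : G.unobs = {4, 5}) (i : Fin 6) :
    i ∈ G.verts := by
  rw [CausalGraph.verts, hobs, hunobs]; fin_cases i <;> decide

lemma Q_eq (hobs : G.obs = {0, 1, 2, 3}) (hunobs : G.unobs = {4, 5})
    (hE : ∀ a b : Fin 6, G.E a b ↔
      ((a, b) = (0, 2) ∨ (a, b) = (1, 3) ∨ (a, b) = (4, 0) ∨
       (a, b) = (4, 1) ∨ (a, b) = (5, 2) ∨ (a, b) = (5, 3)))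
    (det : Bool) (S : Finset (Fin 6)) (v : Fin 6 → ℕ)
    (hv : v ∈ (exSEM G hobs hE det).obsAssign) :
    (exSEM G hobs hE det).Q S v = ∏ x ∈ S, (exSEM G hobs hE det).pO x (v x) v := by
  set M := exSEM G hobs hE det with hM
  simp only [SEM.obsAssign, Fintype.mem_piFinset] at hv
  have hdom : ∀ i : Fin 6, M.dom i = if (i : ℕ) < 4 then {0, 1} else {0} := fun i => rfl
  have hvlt : ∀ i : Fin 6, ¬ (i : ℕ) < 4 → v i = 0 := by
    intro i hi
    have h1 : i ∉ G.obs := by rw [obs_iff G hobs]; exact hi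
    have := hv i
    rw [if_neg h1] at this
    simpa using this
  have hv4 : v 4 = 0 := hvlt 4 (by decide)
  have hv5 : v 5 = 0 := hvlt 5 (by decide)
  have hfil : @Finset.filter (Fin 6 → ℕ) (fun w => ∀ x ∈ G.obs, w x = v x)
      (fun a => Fintype.decidableForallFintype) M.fullAssign = {v} := by
    ext w
    simp only [Finset.mem_filter, Finset.mem_singleton, SEM.fullAssign, Fintype.mem_piFinset]
    constructor
    · rintro ⟨hw, hagree⟩
      funext i
      by_cases hi : (i : ℕ) < 4
      · exact hagree i ((obs_iff G hobs i).mpr hi)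
      · have := hw i
        rw [if_pos (verts_univ G hobs hunobs i), hdom i, if_neg hi] at this
        simp only [Finset.mem_singleton] at this
        rw [this, hvlt i hi]
    · rintro rfl
      refine ⟨fun i => ?_, fun x _ => rfl⟩
      rw [if_pos (verts_univ G hobs hunobs i)]
      by_cases hi : (i : ℕ) < 4
      · have h1 : i ∈ G.obs := (obs_iff G hobs i).mpr hi
        have := hv i
        rwa [if_pos h1] at this
      · rw [hdom i, if_neg hi]
        simp [hvlt i hi]
  have hU : ∏ u ∈ G.unobs, M.pU u (v u) = 1 := by
    rw [hunobs]
    rw [Finset.prod_insert (by decide), Finset.prod_singleton, hv4, hv5]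
    norm_num [hM, exSEM]
  have hQ : M.Q S v = (∏ x ∈ S, M.pO x (v x) v) * ∏ u ∈ G.unobs, M.pU u (v u) := by
    rw [SEM.Q, hfil, Finset.sum_singleton]
  rw [hQ, hU, mul_one]

lemma P_eq (hobs : G.obs = {0, 1, 2, 3}) (hunobs : G.unobs = {4, 5})
    (hE : ∀ a b : Fin 6, G.E a b ↔
      ((a, b) = (0, 2) ∨ (a, b) = (1, 3) ∨ (a, b) = (4, 0) ∨
       (a, b) = (4, 1) ∨ (a, b) = (5, 2) ∨ (a, b) = (5, 3)))
    (v : Fin 6 → ℕ) (hv : v ∈ (exSEM G hobs hE true).obsAssign) :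
    (exSEM G hobs hE true).P v = (exSEM G hobs hE false).P v := by
  have hv' : v ∈ (exSEM G hobs hE false).obsAssign := hv
  rw [SEM.P, SEM.P, Q_eq G hobs hunobs hE true G.obs v hv,
    Q_eq G hobs hunobs hE false G.obs v hv']
  by_cases h1 : v 1 = 0
  · refine Finset.prod_congr rfl fun x hx => ?_
    by_cases hx3 : x = 3
    · subst hx3; simp [exSEM, h1]
    · simp [exSEM, hx3]
  · have hmem : (1 : Fin 6) ∈ G.obs := by rw [hobs]; decide
    rw [Finset.prod_eq_zero hmem (by simp [exSEM, h1]),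
      Finset.prod_eq_zero hmem (by simp [exSEM, h1])]

lemma Px_eq (hobs : G.obs = {0, 1, 2, 3}) (hunobs : G.unobs = {4, 5})
    (hE : ∀ a b : Fin 6, G.E a b ↔
      ((a, b) = (0, 2) ∨ (a, b) = (1, 3) ∨ (a, b) = (4, 0) ∨
       (a, b) = (4, 1) ∨ (a, b) = (5, 2) ∨ (a, b) = (5, 3)))
    (det : Bool) :
    (exSEM G hobs hE det).Px {0, 1} (fun i => if i = 0 then 0 else 1) {2, 3} (fun _ => 0)
      = if det then 0 else 1 := by
  set M := exSEM G hobs hE det with hM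
  set vstar : Fin 6 → ℕ := fun i => if i = 1 then 1 else 0 with hvstar
  have hvmem : vstar ∈ M.obsAssign := by
    simp only [SEM.obsAssign, Fintype.mem_piFinset]
    intro i
    fin_cases i <;> (simp [hvstar, hobs, hM, exSEM]; try decide)
  have hfil : @Finset.filter (Fin 6 → ℕ) (fun v =>
      (∀ i ∈ ({0, 1} : Finset (Fin 6)), v i = if i = 0 then 0 else 1) ∧
      (∀ i ∈ ({2, 3} : Finset (Fin 6)), v i = 0))
      (fun a => @instDecidableAnd _ _ Fintype.decidableForallFintype
        Fintype.decidableForallFintype) M.obsAssign = {vstar} := by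
    ext w
    simp only [Finset.mem_filter, Finset.mem_singleton]
    constructor
    · rintro ⟨hw, hX, hY⟩
      simp only [SEM.obsAssign, Fintype.mem_piFinset] at hw
      funext i
      fin_cases i
      · simpa [hvstar] using hX 0 (by decide)
      · simpa [hvstar] using hX 1 (by decide)
      · simpa [hvstar] using hY 2 (by decide)
      · simpa [hvstar] using hY 3 (by decide)
      · have := hw 4
        rw [if_neg (by rw [hobs]; decide)] at this
        simpa [hvstar] using this
      · have := hw 5
        rw [if_neg (by rw [hobs]; decide)] at this
        simpa [hvstar] using this
    · rintro rfl
      refine ⟨hvmem, fun i hi => ?_, fun i hi => ?_⟩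
      · fin_cases hi <;> rfl
      · fin_cases hi <;> rfl
  have hPx : M.Px {0, 1} (fun i => if i = 0 then 0 else 1) {2, 3} (fun _ => 0)
      = M.Q (G.obs \ {0, 1}) vstar := by
    rw [SEM.Px, hfil, Finset.sum_singleton]
  rw [hPx, Q_eq G hobs hunobs hE det _ vstar hvmem]
  have hset : G.obs \ {0, 1} = ({2, 3} : Finset (Fin 6)) := by rw [hobs]; decide
  rw [hset, Finset.prod_insert (by decide), Finset.prod_singleton]
  cases det <;> simp [hM, exSEM, hvstar]

end Ex2Counterexample

/-- Example 2. In the graph with `V = {X₁, X₂, Y₁, Y₂}`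
(vertices `0,1,2,3`), `U = {U₁, U₂}` (vertices `4,5`) and edges `X₁ → Y₁`, `X₂ → Y₂`,
`U₁ → X₁`, `U₁ → X₂`, `U₂ → Y₁`, `U₂ → Y₂`, there are SEMs `M₁, M₂ ∈ 𝕄(G)` with binary
observed domains, equal observational distributions, and different post-interventional
probabilities `P_{(X₁,X₂)=(0,1)}(Y₁=0, Y₂=0)`; hence, dropping positivity, the causal
effect of `{X₁, X₂}` on `{Y₁, Y₂}` is not identifiable from `G`. -/
theorem not_identifiable_without_positivity
    (G : CausalGraph (Fin 6))
    (hobs : G.obs = {0, 1, 2, 3}) (hunobs : G.unobs = {4, 5})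
    (hE : ∀ a b : Fin 6, G.E a b ↔
      ((a, b) = (0, 2) ∨ (a, b) = (1, 3) ∨ (a, b) = (4, 0) ∨
       (a, b) = (4, 1) ∨ (a, b) = (5, 2) ∨ (a, b) = (5, 3))) :
    (∃ M₁ M₂ : CausalGraph.SEM G,
      (∀ i ∈ G.obs, M₁.dom i = {0, 1}) ∧ (∀ i ∈ G.obs, M₂.dom i = {0, 1}) ∧
      (∀ v ∈ M₁.obsAssign, M₁.P v = M₂.P v) ∧
      M₁.Px {0, 1} (fun i => if i = 0 then 0 else 1) {2, 3} (fun _ => 0) ≠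
        M₂.Px {0, 1} (fun i => if i = 0 then 0 else 1) {2, 3} (fun _ => 0)) ∧
    ¬ G.IdentifiableNP {0, 1} {2, 3} := by
  classical
  open Ex2Counterexample in
  set M₁ := exSEM G hobs hE true with hM1
  set M₂ := exSEM G hobs hE false with hM2
  have hdom1 : ∀ i ∈ G.obs, M₁.dom i = ({0, 1} : Finset ℕ) := by
    intro i hi
    have h4 : (i : ℕ) < 4 := (obs_iff G hobs i).mp hi
    simp [hM1, exSEM, h4]
  have hdom2 : ∀ i ∈ G.obs, M₂.dom i = ({0, 1} : Finset ℕ) := hdom1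
  have hP : ∀ v ∈ M₁.obsAssign, M₁.P v = M₂.P v := fun v hv =>
    P_eq G hobs hunobs hE v hv
  have hne : M₁.Px {0, 1} (fun i => if i = 0 then 0 else 1) {2, 3} (fun _ => 0) ≠
      M₂.Px {0, 1} (fun i => if i = 0 then 0 else 1) {2, 3} (fun _ => 0) := by
    rw [hM1, hM2, Px_eq G hobs hunobs hE true, Px_eq G hobs hunobs hE false]
    norm_num
  refine ⟨⟨M₁, M₂, hdom1, hdom2, hP, hne⟩, fun hid => ?_⟩
  refine hne (hid M₁ M₂ (fun i _ => rfl) hP _ _ ?_ ?_)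
  · intro i hi
    have h4 : (i : ℕ) < 4 := by fin_cases hi <;> decide
    simp only [hM1, exSEM, h4, if_true]
    split <;> simp
  · intro i hi
    have h4 : (i : ℕ) < 4 := by fin_cases hi <;> decide
    simp [hM1, exSEM, h4]
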